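/- Energy conservation of the time-continuous discrete system: let w : {0,…,n−1} → ℝ, and for an n×n complex matrix U define U^♭ to be the matrix whose row 0 has entries (U^♭)_{0s} = U_{0s}·w_s and all other entries zero. Let U : ℝ → Mₙ(ℂ) be differentiable and suppose that for every t, Tr( ( (d/dt)(U(t)^♭) + U(t)*·U(t)^♭ − U(t)^♭·U(t)* ) · U(t)* ) = 0. Then the energy E(t) = Tr(U(t)^♭·U(t)*) is constant in t. -/

import Mathlib

open Matrix

attribute [local instance] Matrix.normedAddCommGroup Matrix.normedSpace

def flatLin (n : ℕ) (hn : 0 < n) (w : Fin n → ℝ) :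
    Matrix (Fin n) (Fin n) ℂ →ₗ[ℂ] Matrix (Fin n) (Fin n) ℂ where
  toFun M := Matrix.of fun i s =>
    if i = (⟨0, hn⟩ : Fin n) then M ⟨0, hn⟩ s * (w s : ℂ) else 0
  map_add' M N := by
    ext i s
    by_cases h : i = (⟨0, hn⟩ : Fin n) <;> simp [h, add_mul]
  map_smul' c M := by
    ext i s
    by_cases h : i = (⟨0, hn⟩ : Fin n) <;> simp [h, mul_assoc]

def entryLin (n : ℕ) (i s : Fin n) : Matrix (Fin n) (Fin n) ℂ →ₗ[ℂ] ℂ where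
  toFun M := M i s
  map_add' _ _ := rfl
  map_smul' _ _ := rfl

theorem energy_conservation_continuous_time (n : ℕ) (hn : 0 < n)
    (w : Fin n → ℝ)
    (flat : Matrix (Fin n) (Fin n) ℂ → Matrix (Fin n) (Fin n) ℂ)
    (hflat : ∀ (U : Matrix (Fin n) (Fin n) ℂ) (i s : Fin n),
      flat U i s =
        if i = (⟨0, hn⟩ : Fin n) then U ⟨0, hn⟩ s * (w s : ℂ) else 0)
    (U : ℝ → Matrix (Fin n) (Fin n) ℂ) (hU : Differentiable ℝ U)
    (heq : ∀ t : ℝ,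
      Matrix.trace
        ((deriv (fun τ => flat (U τ)) t + (U t)ᴴ * flat (U t)
            - flat (U t) * (U t)ᴴ) * (U t)ᴴ) = 0)
    (t₁ t₂ : ℝ) :
    Matrix.trace (flat (U t₁) * (U t₁)ᴴ) =
      Matrix.trace (flat (U t₂) * (U t₂)ᴴ) := by
  set z : Fin n := ⟨0, hn⟩ with hz
  -- flat agrees with the linear map
  have hfl : ∀ M, flat M = flatLin n hn w M := by
    intro M
    ext i s
    rw [hflat]
    rfl
  set L := ((flatLin n hn w).toContinuousLinearMap.restrictScalars ℝ) with hL
  have hLapp : ∀ M, L M = flatLin n hn w M := fun _ => rfl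
  -- derivative of flat ∘ U
  have hder : ∀ t, deriv (fun τ => flat (U τ)) t = flat (deriv U t) := by
    intro t
    have h1 : HasDerivAt (fun τ => L (U τ)) (L (deriv U t)) t :=
      L.hasFDerivAt.comp_hasDerivAt t (hU t).hasDerivAt
    have h2 : (fun τ => flat (U τ)) = fun τ => L (U τ) := by
      funext τ; rw [hfl, hLapp]
    rw [h2]; exact h1.deriv.trans (by rw [hLapp, hfl])
  -- trace formula
  have htr : ∀ (M N : Matrix (Fin n) (Fin n) ℂ),
      Matrix.trace (flat M * Nᴴ) =
        ∑ k, M z k * (w k : ℂ) * (starRingEnd ℂ) (N z k) := by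
    intro M N
    have : ∀ i, (flat M * Nᴴ) i i = ∑ k, flat M i k * (starRingEnd ℂ) (N i k) := by
      intro i; simp [Matrix.mul_apply, Matrix.conjTranspose_apply]
    simp only [Matrix.trace, Matrix.diag, this]
    rw [Finset.sum_comm]
    congr 1
    funext k
    simp [hflat, ite_mul, Finset.sum_ite_eq']
  -- reduce hypothesis: Tr(flat(U') Uᴴ) = 0
  have hkey : ∀ t, ∑ k, deriv U t z k * (w k : ℂ) * (starRingEnd ℂ) (U t z k) = 0 := by
    intro t
    have h := heq t
    rw [sub_mul, add_mul, Matrix.trace_sub, Matrix.trace_add] at h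
    have hc : Matrix.trace ((U t)ᴴ * flat (U t) * (U t)ᴴ)
        = Matrix.trace (flat (U t) * (U t)ᴴ * (U t)ᴴ) := by
      rw [Matrix.trace_mul_cycle, Matrix.trace_mul_comm, ← Matrix.mul_assoc]
    rw [hc, add_sub_cancel_right, hder, htr] at h
    exact h
  -- coordinate derivatives
  have hcoord : ∀ (t : ℝ) (k : Fin n),
      HasDerivAt (fun τ => U τ z k) (deriv U t z k) t := by
    intro t k
    exact ((entryLin n z k).toContinuousLinearMap.restrictScalars
      ℝ).hasFDerivAt.comp_hasDerivAt t (hU t).hasDerivAt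
  -- the energy as a scalar function
  set f : ℝ → ℂ := fun τ => ∑ k, U τ z k * (w k : ℂ) * (starRingEnd ℂ) (U τ z k)
    with hf
  have hfderiv : ∀ t, HasDerivAt f 0 t := by
    intro t
    have hterm : ∀ k : Fin n, HasDerivAt
        (fun τ => U τ z k * (w k : ℂ) * (starRingEnd ℂ) (U τ z k))
        (deriv U t z k * (w k : ℂ) * (starRingEnd ℂ) (U t z k)
          + U t z k * (w k : ℂ) * (starRingEnd ℂ) (deriv U t z k)) t := by
      intro k
      have h1 := (hcoord t k).mul_const ((w k : ℂ))
      have h2 := (hcoord t k).star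
      exact h1.mul h2
    have hsum : HasDerivAt f (∑ k ∈ Finset.univ,
        (deriv U t z k * (w k : ℂ) * (starRingEnd ℂ) (U t z k)
          + U t z k * (w k : ℂ) * (starRingEnd ℂ) (deriv U t z k))) t :=
      HasDerivAt.fun_sum (fun k _ => hterm k)
    have hval : (∑ k ∈ Finset.univ,
        (deriv U t z k * (w k : ℂ) * (starRingEnd ℂ) (U t z k)
          + U t z k * (w k : ℂ) * (starRingEnd ℂ) (deriv U t z k))) = 0 := by
      rw [Finset.sum_add_distrib]
      have h2 : (∑ k, U t z k * (w k : ℂ) * (starRingEnd ℂ) (deriv U t z k))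
          = (starRingEnd ℂ) (∑ k, deriv U t z k * (w k : ℂ)
              * (starRingEnd ℂ) (U t z k)) := by
        rw [map_sum]
        congr 1
        funext k
        simp only [_root_.map_mul, Complex.conj_ofReal, Complex.conj_conj]
        ring
      rw [h2, hkey t]
      simp
    rw [← hval]
    exact hsum
  have hconst : f t₁ = f t₂ := by
    apply is_const_of_deriv_eq_zero
    · exact fun t => (hfderiv t).differentiableAt
    · exact fun t => (hfderiv t).deriv
  have hE : ∀ t, Matrix.trace (flat (U t) * (U t)ᴴ) = f t := by
    intro t; rw [htr]
  rw [hE, hE, hconst]
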